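/- Let U be a finite set of pairwise distinct unit vectors in ℝ² with pos(U) = ℝ². If u_i ∈ U_□ and u_j = −u_i ∈ U, then every cone-volume vector γ ∈ C_cv(U) satisfies γ_i + (1/2)γ_j ≤ 1/2. -/

import Mathlib

open MeasureTheory Set RealInnerProductSpace

noncomputable section

abbrev V2 : Type := EuclideanSpace ℝ (Fin 2)

/-- The positive hull: all nonnegative linear combinations of elements of `M`. -/
def pos {E : Type*} [AddCommMonoid E] [Module ℝ E] (M : Set E) : Set E :=
  {x | ∃ (s : Finset E) (c : E → ℝ),
    (↑s : Set E) ⊆ M ∧ (∀ v, 0 ≤ c v) ∧ x = ∑ v ∈ s, c v • v}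

/-- The polyhedron `P(U,b) = {x : ⟨uᵢ,x⟩ ≤ bᵢ for all i}`. -/
def polyP {m : ℕ} (u : Fin m → V2) (b : Fin m → ℝ) : Set V2 :=
  {x | ∀ i, (inner ℝ (u i) x : ℝ) ≤ b i}

/-- The face of `P(U,b)` with outer normal `uᵢ`. -/
def faceF {m : ℕ} (u : Fin m → V2) (b : Fin m → ℝ) (i : Fin m) : Set V2 :=
  {x ∈ polyP u b | (inner ℝ (u i) x : ℝ) = b i}

/-- The cone-volume vector of `P(U,b)`: entry `i` is the area of `conv({0} ∪ Fᵢ(b))`. -/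
def cv {m : ℕ} (u : Fin m → V2) (b : Fin m → ℝ) : Fin m → ℝ :=
  fun i => (volume (convexHull ℝ (insert 0 (faceF u b i)))).toReal

/-- The cone-volume set `C_cv(U)`. -/
def Ccv {m : ℕ} (u : Fin m → V2) : Set (Fin m → ℝ) :=
  {g | ∃ b : Fin m → ℝ, (∀ i, 0 ≤ b i) ∧
    (volume (polyP u b)).toReal = 1 ∧ g = cv u b}

/-- The subspace concentration polytope
`P_scc(U) = conv{ (1/2)(eᵢ+eⱼ) : uᵢ, uⱼ linearly independent }`. -/
def Pscc {m : ℕ} (u : Fin m → V2) : Set (Fin m → ℝ) :=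
  convexHull ℝ
    {x | ∃ i j, LinearIndependent ℝ ![u i, u j] ∧
      x = (1 / 2 : ℝ) • (Pi.single i 1 + Pi.single j 1)}

/-- Indices `i` with `uᵢ ∈ U_Δ`: some triple containing `uᵢ` positively spans `ℝ²`. -/
def DeltaIdx {m : ℕ} (u : Fin m → V2) : Set (Fin m) :=
  {i | ∃ j k, pos {u i, u j, u k} = Set.univ}

/-- Indices `i` with `uᵢ ∈ U_□`. -/
def SqIdx {m : ℕ} (u : Fin m → V2) : Set (Fin m) :=
  {i | ¬ ∃ j k, pos {u i, u j, u k} = Set.univ}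

/-- Indices `k` with `u_k ∈ U_{□,uᵢ}`: `u_k` together with some `u_l` completes
`{uᵢ, -uᵢ}` to a positively spanning quadruple. -/
def SqAdj {m : ℕ} (u : Fin m → V2) (i : Fin m) : Set (Fin m) :=
  {k | ∃ l, pos {u i, -u i, u k, u l} = Set.univ}

lemma vol_image_lin (a b c d : ℝ) (S : Set (ℝ × ℝ)) :
    volume ((fun p : ℝ × ℝ => (a * p.1 + b * p.2, c * p.1 + d * p.2)) '' S)
      = ENNReal.ofReal |a * d - b * c| * volume S := by
  have : (fun p : ℝ × ℝ => (a * p.1 + b * p.2, c * p.1 + d * p.2))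
      = (Matrix.toLin (Module.Basis.finTwoProd ℝ) (Module.Basis.finTwoProd ℝ) !![a, b; c, d] : ℝ × ℝ →ₗ[ℝ] ℝ × ℝ) := by
    funext p; simp [Matrix.toLin_finTwoProd_apply]
  rw [this, Measure.addHaar_image_linearMap, LinearMap.det_toLin, Matrix.det_fin_two_of]

lemma vol_preimage_lin (a b c d : ℝ) (h : a * d - b * c = 1) (S : Set (ℝ × ℝ)) :
    volume ((fun p : ℝ × ℝ => (a * p.1 + b * p.2, c * p.1 + d * p.2)) ⁻¹' S) = volume S := by
  have hpre : (fun p : ℝ × ℝ => (a * p.1 + b * p.2, c * p.1 + d * p.2)) ⁻¹' S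
      = (fun p : ℝ × ℝ => (d * p.1 + (-b) * p.2, (-c) * p.1 + a * p.2)) '' S := by
    ext p
    constructor
    · intro hp
      refine ⟨(a * p.1 + b * p.2, c * p.1 + d * p.2), hp, ?_⟩
      have h1 : d * (a * p.1 + b * p.2) + -b * (c * p.1 + d * p.2) = p.1 := by
        linear_combination p.1 * h
      have h2 : -c * (a * p.1 + b * p.2) + a * (c * p.1 + d * p.2) = p.2 := by
        linear_combination p.2 * h
      rw [show d * (a * p.1 + b * p.2) + -b * (c * p.1 + d * p.2) = d * (a * p.1 + b * p.2) + -(b * (c * p.1 + d * p.2)) by ring] at h1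
      rw [show -c * (a * p.1 + b * p.2) + a * (c * p.1 + d * p.2) = -(c * (a * p.1 + b * p.2)) + a * (c * p.1 + d * p.2) by ring] at h2
      exact Prod.ext (by simpa using h1) (by simpa using h2)
    · rintro ⟨q, hq, rfl⟩
      simp only [Set.mem_preimage]
      have h1 : a * (d * q.1 + -b * q.2) + b * (-c * q.1 + a * q.2) = q.1 := by
        linear_combination q.1 * h
      have h2 : c * (d * q.1 + -b * q.2) + d * (-c * q.1 + a * q.2) = q.2 := by
        linear_combination q.2 * h
      rw [h1, h2]
      exact hq
  rw [hpre, vol_image_lin]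
  have hd : d * a - -b * -c = 1 := by linear_combination h
  rw [hd]
  simp



lemma line_null : volume {p : ℝ × ℝ | p.1 + p.2 = 1} = 0 := by
  have hm : MeasurableSet {p : ℝ × ℝ | p.1 + p.2 = 1} :=
    (isClosed_eq (by fun_prop) continuous_const).measurableSet
  rw [Measure.volume_eq_prod, Measure.prod_apply hm]
  have : ∀ x : ℝ, (Prod.mk x ⁻¹' {p : ℝ × ℝ | p.1 + p.2 = 1}) = {1 - x} := by
    intro x; ext y; simp only [Set.mem_preimage, Set.mem_setOf_eq, Set.mem_singleton_iff]; constructor <;> intro h <;> linarith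
  simp only [this]
  simp

lemma vol_D_le : 2 * volume {p : ℝ × ℝ | 0 ≤ p.1 ∧ 0 ≤ p.2 ∧ p.1 + p.2 ≤ 1} ≤ 1 := by
  set D := {p : ℝ × ℝ | 0 ≤ p.1 ∧ 0 ≤ p.2 ∧ p.1 + p.2 ≤ 1} with hD
  have hmD : MeasurableSet D := by
    apply MeasurableSet.inter
    · exact measurableSet_le measurable_const measurable_fst
    apply MeasurableSet.inter
    · exact measurableSet_le measurable_const measurable_snd
    · exact measurableSet_le (measurable_fst.add measurable_snd) measurable_const
  set ρ : ℝ × ℝ → ℝ × ℝ := fun w => (1 - w.1, 1 - w.2) with hρ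
  have hmρ : Measurable ρ := by fun_prop
  set D' := ρ ⁻¹' D with hD'
  -- vol D' = vol D
  have hvol' : volume D' = volume D := by
    have hsplit : D' = (fun p : ℝ × ℝ => ((-1 : ℝ) * p.1 + 0 * p.2, 0 * p.1 + (-1) * p.2)) ⁻¹'
        ((fun v : ℝ × ℝ => ((1:ℝ),(1:ℝ)) + v) ⁻¹' D) := by
      ext p
      have : ((1:ℝ),(1:ℝ)) + ((-1 : ℝ) * p.1 + 0 * p.2, 0 * p.1 + (-1) * p.2) = (1 - p.1, 1 - p.2) := by
        simp [Prod.ext_iff]; constructor <;> ring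
      simp only [hD', hρ, Set.mem_preimage, this]
    rw [hsplit, vol_preimage_lin (-1) 0 0 (-1) (by ring), measure_preimage_add]
  have hsub : D ∪ D' ⊆ Set.Icc (0:ℝ) 1 ×ˢ Set.Icc (0:ℝ) 1 := by
    rintro p (⟨h1, h2, h3⟩ | hp)
    · exact ⟨⟨h1, by linarith⟩, ⟨h2, by linarith⟩⟩
    · obtain ⟨h1, h2, h3⟩ := hp
      simp only [hρ] at h1 h2 h3
      exact ⟨⟨by linarith, by linarith⟩, ⟨by linarith, by linarith⟩⟩
  have hinter : D ∩ D' ⊆ {p : ℝ × ℝ | p.1 + p.2 = 1} := by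
    rintro p ⟨⟨_, _, h3⟩, h1', h2', h3'⟩
    simp only [hρ] at h3'
    simp only [Set.mem_setOf_eq]
    linarith
  have key : volume (D ∪ D') + volume (D ∩ D') = volume D + volume D' :=
    measure_union_add_inter D (hmρ hmD)
  have h1 : volume (D ∪ D') ≤ 1 := by
    calc volume (D ∪ D') ≤ volume (Set.Icc (0:ℝ) 1 ×ˢ Set.Icc (0:ℝ) 1) := measure_mono hsub
    _ = 1 := by rw [Measure.volume_eq_prod, Measure.prod_prod, Real.volume_Icc]; norm_num
  have h2 : volume (D ∩ D') = 0 :=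
    measure_mono_null hinter line_null
  calc 2 * volume D = volume D + volume D := two_mul _
  _ = volume D + volume D' := by rw [hvol']
  _ = volume (D ∪ D') + volume (D ∩ D') := key.symm
  _ ≤ 1 + 0 := add_le_add h1 h2.le
  _ = 1 := by simp

lemma stdtri_subset : convexHull ℝ {((0:ℝ),(0:ℝ)), (1,0), (0,1)}
    ⊆ {p : ℝ × ℝ | 0 ≤ p.1 ∧ 0 ≤ p.2 ∧ p.1 + p.2 ≤ 1} := by
  apply convexHull_min
  · rintro p (rfl | rfl | rfl) <;> norm_num
  · intro p hp q hq a b ha hb hab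
    obtain ⟨h1, h2, h3⟩ := hp
    obtain ⟨h1', h2', h3'⟩ := hq
    refine ⟨?_, ?_, ?_⟩ <;>
      simp only [Prod.fst_add, Prod.snd_add, Prod.smul_fst, Prod.smul_snd, smul_eq_mul] <;>
      nlinarith

lemma tri_vol (β c d : ℝ) (hβ : 0 ≤ β) (hcd : c ≤ d) :
    2 * volume (convexHull ℝ {((0:ℝ),(0:ℝ)), (β, c), (β, d)})
      ≤ ENNReal.ofReal (β * (d - c)) := by
  set L : ℝ × ℝ →ₗ[ℝ] ℝ × ℝ :=
    (Matrix.toLin (Module.Basis.finTwoProd ℝ) (Module.Basis.finTwoProd ℝ) !![β, β; c, d]) with hL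
  have hLapp : ∀ p : ℝ × ℝ, L p = (β * p.1 + β * p.2, c * p.1 + d * p.2) := by
    intro p; rw [hL, Matrix.toLin_finTwoProd_apply]
  set Δ := convexHull ℝ {((0:ℝ),(0:ℝ)), (1,0), (0,1)} with hΔ
  have hsub : convexHull ℝ {((0:ℝ),(0:ℝ)), (β, c), (β, d)} ⊆ L '' Δ := by
    apply convexHull_min
    · rintro p (rfl | rfl | rfl)
      · exact ⟨(0,0), subset_convexHull ℝ _ (by norm_num), by rw [hLapp]; norm_num⟩
      · exact ⟨(1,0), subset_convexHull ℝ _ (by norm_num), by rw [hLapp]; norm_num⟩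
      · exact ⟨(0,1), subset_convexHull ℝ _ (by norm_num), by rw [hLapp]; norm_num⟩
    · exact (convex_convexHull ℝ _).linear_image L
  have hΔle : 2 * volume Δ ≤ 1 := le_trans
    (mul_le_mul_right (measure_mono stdtri_subset) 2) vol_D_le
  have himg : volume (L '' Δ) = ENNReal.ofReal |β * d - β * c| * volume Δ := by
    have : (L : ℝ × ℝ → ℝ × ℝ) = fun p : ℝ × ℝ => (β * p.1 + β * p.2, c * p.1 + d * p.2) := by
      funext p; exact hLapp p
    rw [this, vol_image_lin]
  calc 2 * volume (convexHull ℝ {((0:ℝ),(0:ℝ)), (β, c), (β, d)})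
      ≤ 2 * volume (L '' Δ) := mul_le_mul_right (measure_mono hsub) 2
  _ = ENNReal.ofReal |β * d - β * c| * (2 * volume Δ) := by rw [himg]; ring
  _ ≤ ENNReal.ofReal |β * d - β * c| * 1 := mul_le_mul_right hΔle _
  _ = ENNReal.ofReal (β * (d - c)) := by
    rw [mul_one]
    congr 1
    rw [abs_of_nonneg (by nlinarith)]
    ring

open Classical in
lemma sq_cross {m : ℕ} (u : Fin m → V2) (i : Fin m) (hi : i ∈ SqIdx u)
    (p : V2)
    (hexp : ∀ x : V2, x = ⟪u i, x⟫ • u i + ⟪p, x⟫ • p)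
    (hnn : ⟪u i, u i⟫ = (1:ℝ)) (hnp : ⟪u i, p⟫ = (0:ℝ))
    (k l : Fin m) (hk : (0:ℝ) < ⟪p, u k⟫) (hl : ⟪p, u l⟫ < (0:ℝ)) :
    ⟪u i, u k⟫ * ⟪p, u l⟫ - ⟪p, u k⟫ * ⟪u i, u l⟫ ≤ 0 := by
  by_contra hc
  push_neg at hc
  apply hi
  refine ⟨k, l, ?_⟩
  set n := u i with hn
  have hpn : ⟪p, n⟫ = (0:ℝ) := by rw [real_inner_comm]; exact hnp
  have hnk : n ≠ u k := by
    intro h; rw [← h, hpn] at hk; exact lt_irrefl 0 hk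
  have hnl : n ≠ u l := by
    intro h; rw [← h, hpn] at hl; exact lt_irrefl 0 hl
  have hkl : u k ≠ u l := by
    intro h; rw [← h] at hl; exact lt_irrefl 0 (hk.trans hl)
  set αk : ℝ := ⟪n, u k⟫
  set αl : ℝ := ⟪n, u l⟫
  set βk : ℝ := ⟪p, u k⟫
  set βl : ℝ := ⟪p, u l⟫
  set E : ℝ := αk * βl - βk * αl with hE
  have hEpos : 0 < E := hc
  have ext2 : ∀ x y : V2, ⟪n, x⟫ = ⟪n, y⟫ → ⟪p, x⟫ = ⟪p, y⟫ → x = y := by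
    intro x y h1 h2
    calc x = ⟪n, x⟫ • n + ⟪p, x⟫ • p := hexp x
    _ = ⟪n, y⟫ • n + ⟪p, y⟫ • p := by rw [h1, h2]
    _ = y := (hexp y).symm
  -- the universal membership
  rw [Set.eq_univ_iff_forall]
  intro x
  set A : ℝ := ⟪n, x⟫
  set B : ℝ := ⟪p, x⟫
  set q : ℝ := (A * βl - B * αl) / E with hq
  set r : ℝ := (B * αk - A * βk) / E with hr
  have hxid : x = q • u k + r • u l := by
    apply ext2
    · rw [inner_add_right, real_inner_smul_right, real_inner_smul_right]
      show A = q * αk + r * αl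
      rw [hq, hr]; field_simp; ring
    · rw [inner_add_right, real_inner_smul_right, real_inner_smul_right]
      show B = q * βk + r * βl
      rw [hq, hr]; field_simp; ring
  set lam : ℝ := E
  set mu : ℝ := -βl
  set nu : ℝ := βk
  have hmu : 0 < mu := by simp only [mu]; linarith
  have hnu : 0 < nu := hk
  have hid0 : lam • n + mu • u k + nu • u l = 0 := by
    apply ext2
    · rw [inner_add_right, inner_add_right, real_inner_smul_right,
        real_inner_smul_right, real_inner_smul_right, hnn, inner_zero_right]
      show lam * 1 + mu * αk + nu * αl = 0
      simp only [lam, mu, nu, hE]; ring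
    · rw [inner_add_right, inner_add_right, real_inner_smul_right,
        real_inner_smul_right, real_inner_smul_right, hpn, inner_zero_right]
      show lam * 0 + mu * βk + nu * βl = 0
      simp only [mu, nu]; ring
  set c : ℝ := max (max (|q| / mu) (|r| / nu)) 1 with hcdef
  have hc1 : (1:ℝ) ≤ c := le_max_right _ _
  have hc0 : (0:ℝ) ≤ c := by linarith
  have hqc : 0 ≤ q + c * mu := by
    have : |q| / mu ≤ c := le_trans (le_max_left _ _) (le_max_left _ _)
    have h2 : |q| ≤ c * mu := by
      rw [div_le_iff₀ hmu] at this; linarith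
    have := neg_abs_le q
    linarith
  have hrc : 0 ≤ r + c * nu := by
    have : |r| / nu ≤ c := le_trans (le_max_right _ _) (le_max_left _ _)
    have h2 : |r| ≤ c * nu := by
      rw [div_le_iff₀ hnu] at this; linarith
    have := neg_abs_le r
    linarith
  set cf : V2 → ℝ := fun v => if v = n then c * lam else if v = u k then q + c * mu
    else if v = u l then r + c * nu else 0 with hcf
  refine ⟨{n, u k, u l}, cf, ?_, ?_, ?_⟩
  · intro v hv
    simp only [Finset.coe_insert, Finset.coe_singleton, Set.mem_insert_iff,
      Set.mem_singleton_iff] at hv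
    rcases hv with rfl | rfl | rfl
    · exact Set.mem_insert _ _
    · exact Set.mem_insert_of_mem _ (Set.mem_insert _ _)
    · exact Set.mem_insert_of_mem _ (Set.mem_insert_of_mem _ rfl)
  · intro v
    simp only [hcf]
    split_ifs
    · exact mul_nonneg hc0 hEpos.le
    · exact hqc
    · exact hrc
    · exact le_refl 0
  · rw [Finset.sum_insert (by simp [hnk, hnl]),
      Finset.sum_insert (by simp [hkl]), Finset.sum_singleton]
    simp only [hcf]
    simp only [if_true, if_neg (Ne.symm hnk), if_neg (Ne.symm hnl), if_neg (Ne.symm hkl)]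
    have expand : (c * lam) • n + ((q + c * mu) • u k + (r + c * nu) • u l)
        = (q • u k + r • u l) + c • (lam • n + mu • u k + nu • u l) := by
      module
    rw [expand, hid0, smul_zero, add_zero]
    exact hxid

open RealInnerProductSpace in
lemma kml_lemma (n : V2) (s : ℝ) (hab : (n 0)^2 + (n 1)^2 = 1) :
    ∀ S : Set (ℝ × ℝ), MeasurableSet S →
      volume ((fun x : V2 => (⟪n, x⟫, ⟪(WithLp.equiv 2 (Fin 2 → ℝ)).symm ![-(n 1), n 0], x⟫ - s * ⟪n, x⟫)) ⁻¹' S)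
        = volume S := by
  intro S hS
  set a := n 0 with ha
  set b2 := n 1 with hb2
  set p : V2 := (WithLp.equiv 2 (Fin 2 → ℝ)).symm ![-b2, a] with hpdef
  have hp0 : p 0 = -b2 := rfl
  have hp1 : p 1 = a := rfl
  have hinner : ∀ x y : V2, ⟪x, y⟫ = x 0 * y 0 + x 1 * y 1 := fun x y => by
    simp [PiLp.inner_apply, Fin.sum_univ_two]; ring
  have hMP : MeasurePreserving (fun x : V2 => (x 0, x 1)) volume volume := by
    have h1 := EuclideanSpace.volume_preserving_symm_measurableEquiv_toLp (Fin 2)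
    have h2 := volume_preserving_piFinTwo (fun _ : Fin 2 => ℝ)
    exact h2.comp h1
  set M : ℝ × ℝ → ℝ × ℝ := fun w =>
    (a * w.1 + b2 * w.2, (-b2 - s*a) * w.1 + (a - s*b2) * w.2) with hM
  have hsplit : (fun x : V2 => (⟪n, x⟫, ⟪p, x⟫ - s * ⟪n, x⟫)) ⁻¹' S
      = (fun x : V2 => (x 0, x 1)) ⁻¹' (M ⁻¹' S) := by
    ext x
    simp only [Set.mem_preimage, hM]
    have h1 : ⟪n, x⟫ = a * x 0 + b2 * x 1 := by rw [hinner]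
    have h2 : ⟪p, x⟫ - s * ⟪n, x⟫ = (-b2 - s*a) * x 0 + (a - s*b2) * x 1 := by
      rw [hinner, hinner, hp0, hp1]; ring
    rw [h2, h1]
  rw [hsplit]
  have hdet : a * (a - s*b2) - b2 * (-b2 - s*a) = 1 := by linear_combination hab
  have hMmeas : MeasurableSet (M ⁻¹' S) := by
    apply hS.preimage
    fun_prop
  rw [hMP.measure_preimage hMmeas.nullMeasurableSet]
  exact vol_preimage_lin a b2 (-b2 - s*a) (a - s*b2) hdet S

set_option maxHeartbeats 2000000 in
/-- If `uᵢ ∈ U_□` and `uⱼ = -uᵢ`, then every cone-volume vector `γ ∈ C_cv(U)`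
satisfies `γᵢ + (1/2)γⱼ ≤ 1/2`. -/
theorem stmt12 (m : ℕ) (u : Fin m → V2)
    (hunit : ∀ k, ‖u k‖ = 1) (hinj : Function.Injective u)
    (hpos : pos (Set.range u) = Set.univ)
    (i j : Fin m) (hi : i ∈ SqIdx u) (hj : u j = -u i) :
    ∀ γ ∈ Ccv u, γ i + (1 / 2) * γ j ≤ 1 / 2 := by
  classical
  rintro γ ⟨b, hb, hvol, rfl⟩
  -- ### coordinates
  have hnn : ⟪u i, u i⟫ = (1:ℝ) := by
    have h := real_inner_self_eq_norm_sq (u i)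
    rw [hunit i] at h; rw [h]; norm_num
  have hinner : ∀ x y : V2, ⟪x, y⟫ = x 0 * y 0 + x 1 * y 1 := fun x y => by
    simp [PiLp.inner_apply, Fin.sum_univ_two]; ring
  have hab : (u i 0)^2 + (u i 1)^2 = 1 := by
    have h := hnn; rw [hinner] at h; nlinarith [h]
  set p : V2 := (WithLp.equiv 2 (Fin 2 → ℝ)).symm ![-(u i 1), u i 0] with hpdef
  have hp0 : p 0 = -(u i 1) := rfl
  have hp1 : p 1 = u i 0 := rfl
  have hnp : ⟪u i, p⟫ = (0:ℝ) := by rw [hinner, hp0, hp1]; ring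
  have hpn : ⟪p, u i⟫ = (0:ℝ) := by rw [real_inner_comm]; exact hnp
  have hexp : ∀ x : V2, x = ⟪u i, x⟫ • u i + ⟪p, x⟫ • p := by
    intro x
    have c0 : x 0 = ⟪u i, x⟫ * u i 0 + ⟪p, x⟫ * p 0 := by
      rw [hinner, hinner, hp0, hp1]
      linear_combination (-(x 0)) * hab
    have c1 : x 1 = ⟪u i, x⟫ * u i 1 + ⟪p, x⟫ * p 1 := by
      rw [hinner, hinner, hp0, hp1]
      linear_combination (-(x 1)) * hab
    apply PiLp.ext
    intro k
    rw [PiLp.add_apply, PiLp.smul_apply, PiLp.smul_apply, smul_eq_mul, smul_eq_mul]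
    fin_cases k
    · exact c0
    · exact c1
  -- ### alpha/beta coordinates of the normal vectors
  set al : Fin m → ℝ := fun k => ⟪u i, u k⟫ with hal
  set be : Fin m → ℝ := fun k => ⟪p, u k⟫ with hbe
  have hcross : ∀ v k, 0 < be v → be k < 0 → al v * be k - be v * al k ≤ 0 :=
    fun v k hv hk => sq_cross u i hi p hexp hnn hnp v k hv hk
  have hk0 : ∀ k, be k = 0 → u k = u i ∨ k = j := by
    intro k h0
    have h := hexp (u k)
    rw [show (⟪p, u k⟫ : ℝ) = be k from rfl, h0, zero_smul, add_zero] at h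
    have hk' := hunit k
    rw [h, norm_smul, hunit i, mul_one, Real.norm_eq_abs] at hk'
    rcases (abs_eq (by norm_num : (0:ℝ) ≤ 1)).mp hk' with h1 | h1
    · left; rw [h, h1, one_smul]
    · right
      apply hinj
      rw [h, h1, hj, neg_smul, one_smul]
  -- ### the shear parameter s
  set slp : Fin m → ℝ := fun k => -(al k) / be k with hslp
  set Sup : Finset (Fin m) := Finset.filter (fun k => 0 < be k) Finset.univ with hSup
  set Sdn : Finset (Fin m) := Finset.filter (fun k => be k < 0) Finset.univ with hSdn
  set s : ℝ :=
    if h : Sup.Nonempty then (Sup.image slp).max' (Finset.image_nonempty.mpr h)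
    else if h2 : Sdn.Nonempty then (Sdn.image slp).min' (Finset.image_nonempty.mpr h2)
    else 0 with hsdef
  have hs_up : ∀ k, 0 < be k → slp k ≤ s := by
    intro k hk
    have hk' : k ∈ Sup := by simp [hSup, hk]
    rw [hsdef, dif_pos ⟨k, hk'⟩]
    exact Finset.le_max' _ _ (Finset.mem_image_of_mem slp hk')
  have hs_dn : ∀ k, be k < 0 → s ≤ slp k := by
    intro k hk
    have hk' : k ∈ Sdn := by simp [hSdn, hk]
    by_cases h : Sup.Nonempty
    · rw [hsdef, dif_pos h]
      apply Finset.max'_le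
      intro y hy
      obtain ⟨v, hv, rfl⟩ := Finset.mem_image.mp hy
      have hbv : 0 < be v := by
        have := hv; rw [hSup, Finset.mem_filter] at this; exact this.2
      have hcr := hcross v k hbv hk
      have hbk : be k ≠ 0 := ne_of_lt hk
      have hbv' : be v ≠ 0 := ne_of_gt hbv
      have heq : slp k - slp v = (al v * be k - be v * al k) / (be k * be v) := by
        simp only [hslp]; field_simp; ring
      have hden : be k * be v < 0 := mul_neg_of_neg_of_pos hk hbv
      have : 0 ≤ slp k - slp v := by
        rw [heq]
        exact div_nonneg_iff.mpr (Or.inr ⟨hcr, hden.le⟩)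
      linarith
    · rw [hsdef, dif_neg h, dif_pos ⟨k, hk'⟩]
      exact Finset.min'_le _ _ (Finset.mem_image_of_mem slp hk')
  have hal' : ∀ k, k ≠ j → 0 ≤ al k + s * be k := by
    intro k hkj
    rcases lt_trichotomy (be k) 0 with hbk | hbk | hbk
    · have h1 := hs_dn k hbk
      have h2 := mul_le_mul_of_nonpos_right h1 hbk.le
      have hne : be k ≠ 0 := ne_of_lt hbk
      have h3 : slp k * be k = -(al k) := by
        simp only [hslp]; field_simp
      nlinarith [h2, h3]
    · rcases hk0 k hbk with h | h
      · have h4 : al k = 1 := by simp only [hal]; rw [h, hnn]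
        rw [h4, hbk]; norm_num
      · exact absurd h hkj
    · have h1 := hs_up k hbk
      have h2 : -(al k) ≤ s * be k := by
        have := (div_le_iff₀ hbk).mp h1
        linarith [this]
      linarith
  -- ### the affine coordinates
  set tt : V2 → ℝ := fun x => ⟪u i, x⟫ with htt
  set zz : V2 → ℝ := fun x => ⟪p, x⟫ - s * ⟪u i, x⟫ with hzz
  set Φ : V2 → ℝ × ℝ := fun x => (tt x, zz x) with hPhi
  have kml : ∀ S : Set (ℝ × ℝ), MeasurableSet S → volume (Φ ⁻¹' S) = volume S :=
    fun S hS => kml_lemma (u i) s hab S hS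
  have htt0 : tt (0:V2) = 0 := by simp only [htt]; rw [inner_zero_right]
  have hzz0 : zz (0:V2) = 0 := by simp only [hzz]; rw [inner_zero_right, inner_zero_right]; ring
  have httadd : ∀ x y : V2, tt (x + y) = tt x + tt y := by
    intro x y; simp only [htt]; rw [inner_add_right]
  have httsmul : ∀ (c : ℝ) (x : V2), tt (c • x) = c * tt x := by
    intro c x; simp only [htt]; rw [real_inner_smul_right]
  have hzzadd : ∀ x y : V2, zz (x + y) = zz x + zz y := by
    intro x y; simp only [hzz]; rw [inner_add_right, inner_add_right]; ring
  have hzzsmul : ∀ (c : ℝ) (x : V2), zz (c • x) = c * zz x := by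
    intro c x; simp only [hzz]; rw [real_inner_smul_right, real_inner_smul_right]; ring
  have hzf : ∀ (k : Fin m) (x : V2), ⟪u k, x⟫ = (al k + s * be k) * tt x + be k * zz x := by
    intro k x
    have h := hexp (u k)
    calc (⟪u k, x⟫ : ℝ) = ⟪al k • u i + be k • p, x⟫ := by rw [← h]
    _ = al k * ⟪u i, x⟫ + be k * ⟪p, x⟫ := by
        rw [inner_add_left, real_inner_smul_left, real_inner_smul_left]
    _ = (al k + s * be k) * tt x + be k * zz x := by simp only [htt, hzz]; ring
  -- ### basic properties of P
  have h0P : (0:V2) ∈ polyP u b := by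
    intro k
    rw [inner_zero_right]
    exact hb k
  have hPconv : Convex ℝ (polyP u b) := by
    intro x hx y hy aa cc haa hcc hac
    intro k
    have h1 := hx k
    have h2 := hy k
    rw [inner_add_right, real_inner_smul_right, real_inner_smul_right]
    have h3 : aa * b k + cc * b k = b k := by rw [← add_mul, hac, one_mul]
    have h4 := mul_le_mul_of_nonneg_left h1 haa
    have h5 := mul_le_mul_of_nonneg_left h2 hcc
    linarith
  have hP1 : volume (polyP u b) = 1 := (ENNReal.toReal_eq_one_iff _).mp hvol
  have hγj1 : cv u b j ≤ 1 := by
    have hsub : convexHull ℝ (insert 0 (faceF u b j)) ⊆ polyP u b := by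
      apply convexHull_min _ hPconv
      rintro x hx
      rcases Set.mem_insert_iff.mp hx with rfl | hxF
      · exact h0P
      · exact hxF.1
    calc cv u b j ≤ (volume (polyP u b)).toReal :=
      ENNReal.toReal_mono (by rw [hP1]; exact ENNReal.one_ne_top) (measure_mono hsub)
    _ = 1 := hvol
  have hγj0 : 0 ≤ cv u b j := ENNReal.toReal_nonneg
  -- ### trivial cases
  by_cases hFi : (faceF u b i).Nonempty
  swap
  · have hγi : cv u b i = 0 := by
      have he : insert (0:V2) (faceF u b i) = {0} := by
        rw [Set.not_nonempty_iff_eq_empty.mp hFi]; simp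
      show (volume (convexHull ℝ (insert 0 (faceF u b i)))).toReal = 0
      rw [he, convexHull_singleton, measure_singleton]
      rfl
    rw [hγi]; linarith
  by_cases hbi : 0 < b i
  swap
  · have hbi0 : b i = 0 := le_antisymm (not_lt.mp hbi) (hb i)
    have hγi : cv u b i = 0 := by
      have hsub : convexHull ℝ (insert 0 (faceF u b i)) ⊆ Φ ⁻¹' ({(0:ℝ)} ×ˢ Set.univ) := by
        apply convexHull_min
        · rintro x hx
          rcases Set.mem_insert_iff.mp hx with rfl | hxF
          · refine Set.mem_preimage.mpr (Set.mem_prod.mpr ⟨?_, trivial⟩)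
            simp only [hPhi, htt0]
            rfl
          · refine Set.mem_preimage.mpr (Set.mem_prod.mpr ⟨?_, trivial⟩)
            have h1 : tt x = 0 := by
              simp only [htt]
              rw [hxF.2]; exact hbi0
            simp only [hPhi, h1]
            rfl
        · apply Convex.is_linear_preimage
          · exact (convex_singleton _).prod convex_univ
          · constructor
            · intro x y
              simp only [hPhi]; rw [httadd, hzzadd]; rfl
            · intro c x
              simp only [hPhi]; rw [httsmul, hzzsmul]; rfl
      have h0 : volume (Φ ⁻¹' ({(0:ℝ)} ×ˢ Set.univ)) = 0 := by
        rw [kml _ ((measurableSet_singleton (0:ℝ)).prod MeasurableSet.univ)]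
        rw [Measure.volume_eq_prod, Measure.prod_prod, Real.volume_singleton, zero_mul]
      show (volume (convexHull ℝ (insert 0 (faceF u b i)))).toReal = 0
      rw [measure_mono_null hsub h0]
      rfl
    rw [hγi]; linarith
  -- ### main case
  have hΦlin : IsLinearMap ℝ Φ := by
    constructor
    · intro x y
      simp only [hPhi]; rw [httadd, hzzadd]; rfl
    · intro c x
      simp only [hPhi]; rw [httsmul, hzzsmul]; rfl
  have hzzlin : IsLinearMap ℝ zz := by
    constructor
    · intro x y
      rw [hzzadd]
    · intro c x
      rw [hzzsmul]; rfl
  set IY : Set ℝ := zz '' (faceF u b i) with hIY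
  have hFiconv : Convex ℝ (faceF u b i) := by
    intro x hx y hy aa cc haa hcc hac
    refine ⟨hPconv hx.1 hy.1 haa hcc hac, ?_⟩
    rw [inner_add_right, real_inner_smul_right, real_inner_smul_right, hx.2, hy.2]
    linear_combination (b i) * hac
  have hIYconv : Convex ℝ IY := hFiconv.is_linear_image hzzlin
  have hIYmeas : MeasurableSet IY := hIYconv.ordConnected.measurableSet
  have hIYne : IY.Nonempty := hFi.image zz
  -- the box is inside P
  have hBoxP : Φ ⁻¹' (Set.Icc 0 (b i) ×ˢ IY) ⊆ polyP u b := by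
    intro x hx
    simp only [Set.mem_preimage, hPhi, Set.mem_prod, Set.mem_Icc] at hx
    obtain ⟨⟨hx1, hx2⟩, hx3⟩ := hx
    obtain ⟨x', hx'F, hzeq⟩ := hx3
    intro k
    by_cases hkj : k = j
    · subst hkj
      rw [hj, inner_neg_left]
      have : tt x = ⟪u i, x⟫ := rfl
      rw [← this]
      linarith [hb k]
    · have h0 := hal' k hkj
      rw [hzf k x]
      have h1 : (⟪u k, x'⟫ : ℝ) ≤ b k := hx'F.1 k
      rw [hzf k x'] at h1
      have htx' : tt x' = b i := hx'F.2
      rw [htx', hzeq] at h1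
      nlinarith [mul_le_mul_of_nonneg_left hx2 h0]
  -- volume of the box
  have hboxIcc : volume (Φ ⁻¹' (Set.Icc 0 (b i) ×ˢ IY))
      = ENNReal.ofReal (b i) * volume IY := by
    rw [kml _ (measurableSet_Icc.prod hIYmeas), Measure.volume_eq_prod,
      Measure.prod_prod, Real.volume_Icc, sub_zero]
  have hlevol : ENNReal.ofReal (b i) * volume IY ≤ 1 := by
    rw [← hboxIcc, ← hP1]
    exact measure_mono hBoxP
  have hIYfin : volume IY ≠ ⊤ := by
    intro h
    rw [h, ENNReal.mul_top (ne_of_gt (ENNReal.ofReal_pos.mpr hbi))] at hlevol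
    exact absurd hlevol (by simp)
  have hbddA : BddAbove IY := by
    by_contra hba
    obtain ⟨y0, hy0⟩ := hIYne
    have hsub : Set.Ici y0 ⊆ IY := by
      intro y hy
      obtain ⟨w, hw, hyw⟩ := not_bddAbove_iff.mp hba y
      exact hIYconv.ordConnected.out hy0 hw ⟨hy, hyw.le⟩
    apply hIYfin
    apply top_le_iff.mp
    have := measure_mono (μ := volume) hsub
    rwa [Real.volume_Ici] at this
  have hbddB : BddBelow IY := by
    by_contra hbb
    obtain ⟨y0, hy0⟩ := hIYne
    have hsub : Set.Iic y0 ⊆ IY := by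
      intro y hy
      obtain ⟨w, hw, hyw⟩ := not_bddBelow_iff.mp hbb y
      exact hIYconv.ordConnected.out hw hy0 ⟨hyw.le, hy⟩
    apply hIYfin
    apply top_le_iff.mp
    have := measure_mono (μ := volume) hsub
    rwa [Real.volume_Iic] at this
  set cI : ℝ := sInf IY with hcI
  set dI : ℝ := sSup IY with hdI
  obtain ⟨y0, hy0⟩ := hIYne
  have hcd : cI ≤ dI := le_trans (csInf_le hbddB hy0) (le_csSup hbddA hy0)
  have hIYIcc : IY ⊆ Set.Icc cI dI := fun y hy => ⟨csInf_le hbddB hy, le_csSup hbddA hy⟩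
  have hIoo : Set.Ioo cI dI ⊆ IY := by
    intro y hy
    obtain ⟨lo, hlo, hloy⟩ := exists_lt_of_csInf_lt ⟨y0, hy0⟩ hy.1
    obtain ⟨hi', hhi, hyhi⟩ := exists_lt_of_lt_csSup ⟨y0, hy0⟩ hy.2
    exact hIYconv.ordConnected.out hlo hhi ⟨hloy.le, hyhi.le⟩
  have hIYvol_ge : ENNReal.ofReal (dI - cI) ≤ volume IY := by
    rw [← Real.volume_Ioo]
    exact measure_mono hIoo
  -- the triangle
  set T : Set (ℝ × ℝ) := convexHull ℝ {((0:ℝ),(0:ℝ)), (b i, cI), (b i, dI)} with hT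
  have hTmeas : MeasurableSet T := by
    apply IsCompact.measurableSet
    apply Set.Finite.isCompact_convexHull
    exact (Set.finite_singleton _).insert _ |>.insert _
  have hTfin : volume T ≠ ⊤ := by
    apply ne_of_lt
    apply IsCompact.measure_lt_top
    apply Set.Finite.isCompact_convexHull
    exact (Set.finite_singleton _).insert _ |>.insert _
  have hCiT : convexHull ℝ (insert 0 (faceF u b i)) ⊆ Φ ⁻¹' T := by
    apply convexHull_min
    · rintro x hx
      rcases Set.mem_insert_iff.mp hx with rfl | hxF
      · refine Set.mem_preimage.mpr ?_
        have h1 : Φ (0:V2) = ((0:ℝ), (0:ℝ)) := by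
          simp only [hPhi, htt0, hzz0]
        rw [h1, hT]
        exact subset_convexHull ℝ _ (Set.mem_insert _ _)
      · refine Set.mem_preimage.mpr ?_
        have h1 : Φ x = (b i, zz x) := by
          simp only [hPhi]
          rw [show tt x = b i from hxF.2]
        rw [h1]
        have hy : zz x ∈ Set.Icc cI dI := hIYIcc ⟨x, hxF, rfl⟩
        rcases eq_or_lt_of_le hcd with heq | hlt
        · have : zz x = cI := le_antisymm (heq ▸ hy.2) hy.1
          rw [this, hT]
          exact subset_convexHull ℝ _ (Set.mem_insert_of_mem _ (Set.mem_insert _ _))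
        · have hseg : (b i, zz x) ∈ segment ℝ ((b i, cI) : ℝ × ℝ) ((b i, dI) : ℝ × ℝ) := by
            refine ⟨(dI - zz x)/(dI - cI), (zz x - cI)/(dI - cI),
              div_nonneg (by linarith [hy.2]) (by linarith),
              div_nonneg (by linarith [hy.1]) (by linarith), ?_, ?_⟩
            · have hne : dI - cI ≠ 0 := by linarith
              field_simp; ring
            · have hne : dI - cI ≠ 0 := by linarith
              simp only [Prod.smul_mk, smul_eq_mul, Prod.mk_add_mk, Prod.mk.injEq]
              constructor
              · field_simp; ring
              · field_simp; ring
          rw [hT]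
          exact segment_subset_convexHull
            (Set.mem_insert_of_mem _ (Set.mem_insert _ _))
            (Set.mem_insert_of_mem _ (Set.mem_insert_of_mem _ (Set.mem_singleton _))) hseg
    · exact (convex_convexHull ℝ _).is_linear_preimage hΦlin
  have h2T : 2 * volume T ≤ ENNReal.ofReal (b i * (dI - cI)) := tri_vol (b i) cI dI hbi.le hcd
  -- splitting of P
  set A : Set V2 := {x : V2 | ⟪u i, x⟫ ≤ 0} with hA
  have hAmeas : MeasurableSet A :=
    (isClosed_le (Continuous.inner continuous_const continuous_id) continuous_const).measurableSet
  have hsplit : volume (polyP u b ∩ A) + volume (polyP u b \ A) = 1 := by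
    rw [measure_inter_add_diff _ hAmeas, hP1]
  have hCjsub : convexHull ℝ (insert 0 (faceF u b j)) ⊆ polyP u b ∩ A := by
    apply convexHull_min
    · rintro x hx
      rcases Set.mem_insert_iff.mp hx with rfl | hxF
      · refine ⟨h0P, ?_⟩
        show (⟪u i, (0:V2)⟫ : ℝ) ≤ 0
        rw [inner_zero_right]
      · refine ⟨hxF.1, ?_⟩
        show (⟪u i, x⟫ : ℝ) ≤ 0
        have h2 := hxF.2
        rw [hj, inner_neg_left] at h2
        linarith [hb j]
    · apply Convex.inter hPconv
      exact convex_halfSpace_le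
        ⟨fun x y => inner_add_right _ _ _, fun c x => real_inner_smul_right _ _ _⟩ 0
  have hright : ENNReal.ofReal (b i) * volume IY ≤ volume (polyP u b \ A) := by
    have hboxIoc : volume (Φ ⁻¹' (Set.Ioc 0 (b i) ×ˢ IY))
        = ENNReal.ofReal (b i) * volume IY := by
      rw [kml _ (measurableSet_Ioc.prod hIYmeas), Measure.volume_eq_prod,
        Measure.prod_prod, Real.volume_Ioc, sub_zero]
    rw [← hboxIoc]
    apply measure_mono
    intro x hx
    simp only [Set.mem_preimage, hPhi, Set.mem_prod, Set.mem_Ioc] at hx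
    constructor
    · apply hBoxP
      simp only [Set.mem_preimage, hPhi, Set.mem_prod, Set.mem_Icc]
      exact ⟨⟨hx.1.1.le, hx.1.2⟩, hx.2⟩
    · intro hxA
      rw [hA] at hxA
      have : tt x = ⟪u i, x⟫ := rfl
      have h2 := hx.1.1
      rw [this] at h2
      exact absurd hxA (not_le.mpr h2)
  -- conclusion in ℝ≥0∞
  set Ci := convexHull ℝ (insert (0:V2) (faceF u b i)) with hCi
  set Cj := convexHull ℝ (insert (0:V2) (faceF u b j)) with hCj
  have hCile : volume Ci ≤ volume T := by
    calc volume Ci ≤ volume (Φ ⁻¹' T) := measure_mono hCiT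
    _ = volume T := kml T hTmeas
  have key : 2 * volume Ci + volume Cj ≤ 1 := by
    calc 2 * volume Ci + volume Cj
        ≤ ENNReal.ofReal (b i * (dI - cI)) + volume (polyP u b ∩ A) :=
          add_le_add (le_trans (mul_le_mul_right hCile 2) h2T) (measure_mono hCjsub)
    _ ≤ volume (polyP u b \ A) + volume (polyP u b ∩ A) := by
        apply add_le_add_left
        rw [ENNReal.ofReal_mul hbi.le]
        exact le_trans (mul_le_mul_right hIYvol_ge _) hright
    _ = 1 := by rw [add_comm]; exact hsplit
  have hCifin : volume Ci ≠ ⊤ := ne_of_lt (lt_of_le_of_lt hCile (lt_top_iff_ne_top.mpr hTfin))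
  have hCjfin : volume Cj ≠ ⊤ := by
    apply ne_of_lt
    apply lt_of_le_of_lt (measure_mono (fun x hx => (hCjsub hx).1))
    rw [hP1]
    exact ENNReal.one_lt_top
  have hreal := ENNReal.toReal_mono ENNReal.one_ne_top key
  rw [ENNReal.toReal_add (by exact ENNReal.mul_ne_top (by norm_num) hCifin) hCjfin,
    ENNReal.toReal_mul] at hreal
  simp only [ENNReal.toReal_one, ENNReal.toReal_ofNat] at hreal
  have hγi : cv u b i = (volume Ci).toReal := rfl
  have hγj : cv u b j = (volume Cj).toReal := rfl
  rw [hγi, hγj]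
  linarith
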